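/- Let f : ℝ → ℝ be bounded, let a ∈ ℝ, and assume the one-sided limits f(a⁻) = lim_{y→a⁻} f(y) and f(a⁺) = lim_{y→a⁺} f(y) exist with f(a⁻) ≥ f(a⁺). Let u(x) = ∫_a^x f(y) dy. Then the superdifferential of u at a is exactly the interval [f(a⁺), f(a⁻)]: D⁺u(a) = [f(a⁺), f(a⁻)]. -/

import Mathlib

open Set Filter Topology intervalIntegral MeasureTheory

lemma my_intInt (f : ℝ → ℝ) (M : ℝ) (hbd : ∀ y, |f y| ≤ M) (hmeas : Measurable f)
    (a b : ℝ) : IntervalIntegrable f volume a b := by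
  apply IntervalIntegrable.mono_fun' (g := fun _ => M) intervalIntegrable_const
    hmeas.aestronglyMeasurable
  exact ae_of_all _ fun y => hbd y

lemma my_int_le (f : ℝ → ℝ) (a x B : ℝ) (hint : IntervalIntegrable f volume a x)
    (hax : a ≤ x) (h : ∀ y ∈ Ioo a x, f y ≤ B) :
    ∫ y in a..x, f y ≤ B * (x - a) := by
  rw [intervalIntegral.integral_of_le hax,
    setIntegral_congr_set (Ioo_ae_eq_Ioc (a := a) (b := x)).symm]
  calc ∫ y in Ioo a x, f y
      ≤ ∫ _ in Ioo a x, B := by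
        apply setIntegral_mono_on _ (integrableOn_const (by simp))
          measurableSet_Ioo h
        exact ((intervalIntegrable_iff_integrableOn_Ioc_of_le hax).1 hint).mono_set
          Ioo_subset_Ioc_self
    _ = B * (x - a) := by
        rw [setIntegral_const, Real.volume_real_Ioo_of_le hax, smul_eq_mul,
          mul_comm]

lemma my_int_ge (f : ℝ → ℝ) (a x B : ℝ) (hint : IntervalIntegrable f volume a x)
    (hax : a ≤ x) (h : ∀ y ∈ Ioo a x, B ≤ f y) :
    B * (x - a) ≤ ∫ y in a..x, f y := by
  rw [intervalIntegral.integral_of_le hax,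
    setIntegral_congr_set (Ioo_ae_eq_Ioc (a := a) (b := x)).symm]
  calc B * (x - a)
      = ∫ _ in Ioo a x, B := by
        rw [setIntegral_const, Real.volume_real_Ioo_of_le hax, smul_eq_mul,
          mul_comm]
    _ ≤ ∫ y in Ioo a x, f y := by
        apply setIntegral_mono_on (integrableOn_const (by simp)) _
          measurableSet_Ioo h
        exact ((intervalIntegrable_iff_integrableOn_Ioc_of_le hax).1 hint).mono_set
          Ioo_subset_Ioc_self

/-- `c` belongs to the superdifferential `D⁺u(x₀)`. -/
def superdiff (u : ℝ → ℝ) (x₀ : ℝ) : Set ℝ :=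
  {c : ℝ | ∀ ε > (0:ℝ), ∃ δ > (0:ℝ), ∀ x : ℝ, |x - x₀| < δ →
    u x ≤ u x₀ + c * (x - x₀) + ε * |x - x₀|}

theorem stmt3 (f : ℝ → ℝ) (M : ℝ) (hbd : ∀ y, |f y| ≤ M) (hmeas : Measurable f)
    (a fm fp : ℝ)
    (hfm : Tendsto f (𝓝[<] a) (𝓝 fm)) (hfp : Tendsto f (𝓝[>] a) (𝓝 fp))
    (hge : fp ≤ fm) :
    superdiff (fun x => ∫ y in a..x, f y) a = Icc fp fm := by
  have hint : ∀ b c : ℝ, IntervalIntegrable f volume b c :=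
    fun b c => my_intInt f M hbd hmeas b c
  ext c
  simp only [superdiff, mem_setOf_eq, mem_Icc]
  constructor
  · intro hc
    constructor
    · -- fp ≤ c
      apply le_of_forall_pos_le_add
      intro ε hε
      obtain ⟨δ, hδ, hδ'⟩ := hc (ε/3) (by linarith)
      have h1 : ∀ᶠ y in 𝓝[>] a, fp - ε/3 < f y :=
        hfp.eventually (eventually_gt_nhds (by linarith))
      obtain ⟨u, hu, huI⟩ := mem_nhdsGT_iff_exists_Ioo_subset.1 h1
      set x := a + min δ (u - a) / 2 with hx
      have hmin : 0 < min δ (u - a) := lt_min hδ (by simp at hu; linarith)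
      have hax : a < x := by rw [hx]; linarith
      have hxu : x < u := by
        have h4 : min δ (u - a) ≤ u - a := min_le_right _ _
        rw [hx]; simp only [mem_Ioi] at hu; linarith
      have hxd : |x - a| < δ := by
        have h4 : min δ (u - a) ≤ δ := min_le_left _ _
        rw [abs_of_pos (by linarith)]
        rw [hx]; linarith
      have hlow : (fp - ε/3) * (x - a) ≤ ∫ y in a..x, f y := by
        apply my_int_ge f a x _ (hint a x) hax.le
        intro y hy
        exact (huI ⟨hy.1, lt_trans hy.2 hxu⟩).le
      have hup := hδ' x hxd
      simp only [intervalIntegral.integral_same, abs_of_pos (by linarith : (0:ℝ) < x - a),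
        zero_add] at hup
      nlinarith [sub_pos.2 hax]
    · -- c ≤ fm
      apply le_of_forall_pos_le_add
      intro ε hε
      obtain ⟨δ, hδ, hδ'⟩ := hc (ε/3) (by linarith)
      have h1 : ∀ᶠ y in 𝓝[<] a, f y < fm + ε/3 :=
        hfm.eventually (eventually_lt_nhds (by linarith))
      obtain ⟨l, hl, hlI⟩ := mem_nhdsLT_iff_exists_Ioo_subset.1 h1
      simp only [mem_Iio] at hl
      set x := a - min δ (a - l) / 2 with hx
      have hmin : 0 < min δ (a - l) := lt_min hδ (by linarith)
      have hax : x < a := by rw [hx]; linarith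
      have hxl : l < x := by
        have h4 : min δ (a - l) ≤ a - l := min_le_right _ _
        rw [hx]; linarith
      have hxd : |x - a| < δ := by
        have h4 : min δ (a - l) ≤ δ := min_le_left _ _
        rw [abs_of_neg (by linarith)]
        rw [hx]; linarith
      have hhigh : (∫ y in x..a, f y) ≤ (fm + ε/3) * (a - x) := by
        apply my_int_le f x a _ (hint x a) hax.le
        intro y hy
        exact (hlI ⟨lt_trans hxl hy.1, hy.2⟩).le
      have hup := hδ' x hxd
      have hsw : (∫ y in a..x, f y) = -∫ y in x..a, f y :=
        (intervalIntegral.integral_symm x a)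
      simp only [intervalIntegral.integral_same, zero_add,
        abs_of_neg (by linarith : x - a < 0), hsw] at hup
      nlinarith [sub_pos.2 hax]
  · rintro ⟨hcp, hcm⟩ ε hε
    have h1 : ∀ᶠ y in 𝓝[>] a, f y < fp + ε :=
      hfp.eventually (eventually_lt_nhds (by linarith))
    have h2 : ∀ᶠ y in 𝓝[<] a, fm - ε < f y :=
      hfm.eventually (eventually_gt_nhds (by linarith))
    obtain ⟨u, hu, huI⟩ := mem_nhdsGT_iff_exists_Ioo_subset.1 h1
    obtain ⟨l, hl, hlI⟩ := mem_nhdsLT_iff_exists_Ioo_subset.1 h2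
    simp only [mem_Ioi] at hu
    simp only [mem_Iio] at hl
    refine ⟨min (u - a) (a - l), lt_min (by linarith) (by linarith), fun x hxd => ?_⟩
    simp only [intervalIntegral.integral_same, zero_add]
    rcases lt_trichotomy x a with hxa | hxa | hxa
    · -- x < a
      have hxl : l < x := by
        have := abs_lt.1 hxd
        have h3 : min (u - a) (a - l) ≤ a - l := min_le_right _ _
        linarith [this.1]
      have hlow : (fm - ε) * (a - x) ≤ ∫ y in x..a, f y := by
        apply my_int_ge f x a _ (hint x a) hxa.le
        intro y hy
        exact (hlI ⟨lt_trans hxl hy.1, hy.2⟩).le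
      have hsw : (∫ y in a..x, f y) = -∫ y in x..a, f y :=
        (intervalIntegral.integral_symm x a)
      rw [hsw, abs_of_neg (by linarith : x - a < 0)]
      nlinarith [sub_pos.2 hxa]
    · simp [hxa]
    · -- a < x
      have hxu : x < u := by
        have := abs_lt.1 hxd
        have h3 : min (u - a) (a - l) ≤ u - a := min_le_left _ _
        linarith [this.2]
      have hupb : (∫ y in a..x, f y) ≤ (fp + ε) * (x - a) := by
        apply my_int_le f a x _ (hint a x) hxa.le
        intro y hy
        exact (huI ⟨hy.1, lt_trans hy.2 hxu⟩).le
      rw [abs_of_pos (by linarith : (0:ℝ) < x - a)]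
      nlinarith [sub_pos.2 hxa]
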